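/- Let p be an odd prime, s > 1, and let C ⊆ (Z/p^sZ)^n be a Lee-equidistant submodule of rank 1 generated by g ∈ ⟨p^{i-1}⟩ \ ⟨p^i⟩ with constant nonzero Lee weight w, and suppose C is non-degenerate in its support (each coordinate projection is a nonzero ideal or zero). If (n_0,...,n_s) is the support subtype of C, then n_j = 0 for j < i-1, and w = ((p+1)/4)·p^{s-1}·n_{i-1}, and n_{i-1}(p-1) = p^{j-i+2}·n_j for all j ∈ {i,...,s-1}. -/

import Mathlib

/-- The Lee weight of an element of `ZMod m`. -/
def leeW (m : ℕ) (a : ZMod m) : ℕ := min a.val (m - a.val)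

/-- The Lee weight of a vector over `ZMod m`. -/
def leeWV (m n : ℕ) (x : Fin n → ZMod m) : ℕ := ∑ i, leeW m (x i)

lemma zmod_sum_val {m : ℕ} [NeZero m] (F : ℕ → ℕ) :
    ∑ a : ZMod m, F a.val = ∑ k ∈ Finset.range m, F k := by
  obtain ⟨m', rfl⟩ := Nat.exists_eq_succ_of_ne_zero (NeZero.ne m)
  exact Fin.sum_univ_eq_sum_range (fun k => F k) (m' + 1)

lemma sum_range_mul_mod (F : ℕ → ℕ) (q M : ℕ) :
    ∑ k ∈ Finset.range (q * M), F (k % M) = q * ∑ k ∈ Finset.range M, F k := by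
  induction q with
  | zero => simp
  | succ q ih =>
    rw [Nat.succ_mul, Finset.range_add, Finset.sum_union]
    · rw [ih, Finset.sum_map]
      have : ∀ j ∈ Finset.range M, F ((addLeftEmbedding (q*M)) j % M) = F j := by
        intro j hj
        simp only [addLeftEmbedding_apply]
        rw [Nat.add_comm, Nat.add_mul_mod_self_right, Nat.mod_eq_of_lt (Finset.mem_range.mp hj)]
      rw [Finset.sum_congr rfl this]
      ring
    · simp only [Finset.disjoint_left, Finset.mem_range, Finset.mem_map, addLeftEmbedding_apply]
      rintro x hx ⟨y, hy, rfl⟩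
      omega

lemma sum_min_gauss (h : ℕ) :
    ∑ k ∈ Finset.range (2*h+1), min k (2*h+1 - k) = h * (h+1) := by
  rw [Finset.range_eq_Ico, ← Finset.sum_Ico_consecutive _ (show 0 ≤ h+1 by omega) (show h+1 ≤ 2*h+1 by omega)]
  have e1 : ∑ k ∈ Finset.Ico 0 (h+1), min k (2*h+1-k) = ∑ k ∈ Finset.range (h+1), k := by
    rw [← Finset.range_eq_Ico]
    exact Finset.sum_congr rfl (fun k hk => by rw [Finset.mem_range] at hk; omega)
  have e2 : ∑ k ∈ Finset.Ico (h+1) (2*h+1), min k (2*h+1-k) = ∑ j ∈ Finset.range h, (h - j) := by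
    rw [Finset.sum_Ico_eq_sum_range]
    have : 2*h+1 - (h+1) = h := by omega
    rw [this]
    exact Finset.sum_congr rfl (fun j hj => by rw [Finset.mem_range] at hj; omega)
  rw [e1, e2]
  have e3 : ∑ j ∈ Finset.range h, (h - j) = ∑ j ∈ Finset.range h, (j+1) := by
    have := Finset.sum_range_reflect (fun j => j + 1) h
    rw [← this]
    exact Finset.sum_congr rfl (fun j hj => by rw [Finset.mem_range] at hj; omega)
  have e4 : ∑ j ∈ Finset.range h, (j+1) = ∑ j ∈ Finset.range (h+1), j := by
    rw [Finset.sum_range_succ' (fun j => j) h]; simp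
  have g := Finset.sum_range_id_mul_two (h+1)
  rw [e3, e4]
  simp only [Nat.add_sub_cancel] at g
  rw [Nat.mul_comm h (h+1)]
  omega

lemma val_mul_pow (p s t : ℕ) [NeZero (p^s)] (hts : t ≤ s) (a : ZMod (p^s)) :
    (a * (p:ZMod (p^s))^t).val = p^t * (a.val % p^(s-t)) := by
  have h1 : ((p:ZMod (p^s)))^t = ((p^t : ℕ) : ZMod (p^s)) := by push_cast; ring
  have h3 : (a * (p:ZMod (p^s))^t).val = a.val * p^t % p^s := by
    rw [h1, ZMod.val_mul, ZMod.val_natCast]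
    conv_rhs => rw [Nat.mul_mod, Nat.mod_eq_of_lt (ZMod.val_lt a)]
  have h2 : p^s = p^t * p^(s-t) := by rw [← pow_add]; congr 1; omega
  rw [h3]
  calc a.val * p^t % p^s = p^t * a.val % (p^t * p^(s-t)) := by rw [← h2, Nat.mul_comm]
    _ = p^t * (a.val % p^(s-t)) := Nat.mul_mod_mul_left _ _ _

lemma sum_lee_pow (p s t : ℕ) (hp : 1 < p) (hodd : Odd p) (hts : t ≤ s) [NeZero (p^s)] :
    4 * ∑ a : ZMod (p^s), leeW (p^s) (a * (p:ZMod (p^s))^t) = p^(2*s) - p^(2*t) := by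
  set M := p^(s-t) with hMdef
  have hMpos : 0 < M := Nat.pow_pos (by omega)
  have h2 : p^s = p^t * M := by rw [hMdef, ← pow_add]; congr 1; omega
  have per : ∀ a : ZMod (p^s),
      leeW (p^s) (a * (p:ZMod (p^s))^t) = p^t * min (a.val % M) (M - a.val % M) := by
    intro a
    unfold leeW
    rw [val_mul_pow p s t hts]
    have key : min (p^t * (a.val % M)) (p^t * M - p^t * (a.val % M))
        = p^t * min (a.val % M) (M - a.val % M) := by
      rw [← Nat.mul_sub, Nat.mul_min_mul_left]
    rw [← h2] at key
    exact key
  rw [Finset.sum_congr rfl (fun a _ => per a), ← Finset.mul_sum]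
  have hv : ∑ a : ZMod (p^s), min (a.val % M) (M - a.val % M)
      = ∑ k ∈ Finset.range (p^s), (fun r => min r (M - r)) (k % M) :=
    zmod_sum_val (fun k => min (k % M) (M - k % M))
  rw [hv, h2, sum_range_mul_mod (fun r => min r (M - r)) (p^t) M]
  obtain ⟨h, hh⟩ := hodd.pow (n := s - t)
  have hM2 : M = 2*h+1 := by omega
  rw [hM2, sum_min_gauss h]
  have e1 : p^(2*s) = p^(2*t) * M^2 := by
    rw [hMdef, ← pow_mul, ← pow_add]; congr 1; omega
  rw [e1, hM2]
  ring_nf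
  omega

lemma mem_span_pow_iff (p s t : ℕ) [NeZero (p^s)] (hts : t ≤ s) (x : ZMod (p^s)) :
    x ∈ Ideal.span {(p:ZMod (p^s))^t} ↔ p^t ∣ x.val := by
  rw [Ideal.mem_span_singleton]
  constructor
  · rintro ⟨a, rfl⟩
    rw [mul_comm, val_mul_pow p s t hts]
    exact Dvd.intro _ rfl
  · rintro ⟨c, hc⟩
    refine ⟨(c : ZMod (p^s)), ?_⟩
    have : x = ((x.val : ℕ) : ZMod (p^s)) := (ZMod.natCast_rightInverse x).symm
    rw [this, hc]
    push_cast
    ring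

lemma pow_p_val (p s t : ℕ) (hp : 1 < p) [NeZero (p^s)] (hts : t < s) :
    ((p:ZMod (p^s))^t).val = p^t := by
  have h1 : ((p:ZMod (p^s)))^t = ((p^t : ℕ) : ZMod (p^s)) := by push_cast; ring
  rw [h1, ZMod.val_natCast, Nat.mod_eq_of_lt (Nat.pow_lt_pow_right hp hts)]

lemma span_pow_inj (p s t t' : ℕ) (hp : 1 < p) [NeZero (p^s)] (ht : t < s) (ht' : t' < s)
    (h : Ideal.span {(p:ZMod (p^s))^t} = Ideal.span {(p:ZMod (p^s))^t'}) : t = t' := by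
  have h1 : (p:ZMod (p^s))^t ∈ Ideal.span {(p:ZMod (p^s))^t'} := h ▸ Ideal.subset_span rfl
  have h2 : (p:ZMod (p^s))^t' ∈ Ideal.span {(p:ZMod (p^s))^t} := h ▸ Ideal.subset_span rfl
  rw [mem_span_pow_iff p s t' (le_of_lt ht'), pow_p_val p s t hp ht] at h1
  rw [mem_span_pow_iff p s t (le_of_lt ht), pow_p_val p s t' hp ht'] at h2
  have := (Nat.pow_dvd_pow_iff_le_right hp).mp h1
  have := (Nat.pow_dvd_pow_iff_le_right hp).mp h2
  omega

lemma decomp_unit (p s : ℕ) (hp : p.Prime) [NeZero (p^s)] (x : ZMod (p^s)) (hx : x ≠ 0) :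
    ∃ u : (ZMod (p^s))ˣ, x = (p:ZMod (p^s))^(padicValNat p x.val) * u
      ∧ padicValNat p x.val < s ∧ p^(padicValNat p x.val) ∣ x.val
      ∧ ¬ p^(padicValNat p x.val + 1) ∣ x.val := by
  haveI : Fact p.Prime := ⟨hp⟩
  set t := padicValNat p x.val with htdef
  have hv0 : x.val ≠ 0 := fun h => hx (by
    have := (ZMod.natCast_rightInverse x).symm
    rw [h] at this; simpa using this)
  have hdvd : p^t ∣ x.val := pow_padicValNat_dvd
  have hndvd : ¬ p^(t+1) ∣ x.val := pow_succ_padicValNat_not_dvd hv0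
  have hts : t < s := by
    by_contra hc
    push_neg at hc
    have h1 : p^s ∣ x.val := dvd_trans (pow_dvd_pow p hc) hdvd
    have h2 := Nat.le_of_dvd (Nat.pos_of_ne_zero hv0) h1
    have h3 := ZMod.val_lt x
    omega
  obtain ⟨c, hc⟩ := hdvd
  have hpc : ¬ p ∣ c := fun ⟨d, hd⟩ => hndvd ⟨d, by rw [hc, hd]; ring⟩
  have hu : IsUnit ((c : ℕ) : ZMod (p^s)) := by
    rw [ZMod.isUnit_iff_coprime]
    exact ((Nat.Prime.coprime_iff_not_dvd hp).mpr hpc).symm.pow_right s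
  obtain ⟨u, hu⟩ := hu
  refine ⟨u, ?_, hts, pow_padicValNat_dvd, hndvd⟩
  have : x = ((x.val : ℕ) : ZMod (p^s)) := (ZMod.natCast_rightInverse x).symm
  rw [this, hc, hu]
  push_cast
  ring

lemma sum_lee_unit (p s e : ℕ) (hp : 1 < p) (hodd : Odd p) (hes : e ≤ s) [NeZero (p^s)]
    (u : (ZMod (p^s))ˣ) :
    4 * ∑ a : ZMod (p^s), leeW (p^s) (a * ((p:ZMod (p^s))^e * u)) = p^(2*s) - p^(2*e) := by
  have key : ∑ a : ZMod (p^s), leeW (p^s) (a * ((p:ZMod (p^s))^e * u))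
      = ∑ a : ZMod (p^s), leeW (p^s) (a * (p:ZMod (p^s))^e) := by
    refine Fintype.sum_bijective (fun a : ZMod (p^s) => a * u) (Units.mulRight_bijective u)
      _ _ (fun a => ?_)
    congr 1
    ring
  rw [key]
  exact sum_lee_pow p s e hp hodd hes

lemma mul_pow_eq_zero_iff (p s c : ℕ) (hp : 1 < p) [NeZero (p^s)] (hcs : c ≤ s) (a : ZMod (p^s)) :
    a * (p:ZMod (p^s))^c = 0 ↔ p^(s-c) ∣ a.val := by
  rw [← ZMod.val_eq_zero, val_mul_pow p s c hcs]
  have hppos : 0 < p^c := Nat.pow_pos (by omega)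
  constructor
  · intro h
    rcases Nat.mul_eq_zero.mp h with h | h
    · omega
    · exact Nat.dvd_of_mod_eq_zero h
  · intro h
    rw [Nat.mod_eq_zero_of_dvd h]
    simp

open Finset in
lemma card_val_dvd (p s d : ℕ) (hp : 1 < p) [NeZero (p^s)] (hds : d ≤ s) :
    (univ.filter (fun a : ZMod (p^s) => p^d ∣ a.val)).card = p^(s-d) := by
  have hcard : (Finset.range (p^(s-d))).card = p^(s-d) := Finset.card_range _
  rw [← hcard]
  have hsplit : p^s = p^d * p^(s-d) := by rw [← pow_add]; congr 1; omega
  refine Finset.card_nbij' (fun a => a.val / p^d) (fun k => ((p^d * k : ℕ) : ZMod (p^s)))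
    ?_ ?_ ?_ ?_
  · intro a ha
    rw [Finset.mem_coe, Finset.mem_filter] at ha
    obtain ⟨-, c, hc⟩ := ha
    have hlt : a.val < p^s := ZMod.val_lt a
    dsimp only
    rw [Finset.mem_coe, Finset.mem_range, hc, Nat.mul_div_cancel_left _ (Nat.pow_pos (by omega))]
    by_contra hcon
    push_neg at hcon
    have : p^d * p^(s-d) ≤ p^d * c := Nat.mul_le_mul_left _ hcon
    omega
  · intro k hk
    rw [Finset.mem_coe, Finset.mem_range] at hk
    rw [Finset.mem_coe, Finset.mem_filter]
    refine ⟨Finset.mem_univ _, ?_⟩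
    rw [ZMod.val_natCast]
    exact (Nat.dvd_mod_iff (hsplit ▸ Dvd.intro _ rfl)).mpr ⟨k, rfl⟩
  · intro a ha
    rw [Finset.mem_coe, Finset.mem_filter] at ha
    obtain ⟨-, hdvd⟩ := ha
    dsimp only
    rw [Nat.mul_div_cancel' hdvd]
    exact ZMod.natCast_rightInverse a
  · intro k hk
    rw [Finset.mem_coe, Finset.mem_range] at hk
    dsimp only
    rw [ZMod.val_natCast]
    have hlt : p^d * k < p^s := by
      rw [hsplit]
      exact (Nat.mul_lt_mul_left (Nat.pow_pos (by omega))).mpr hk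
    rw [Nat.mod_eq_of_lt hlt, Nat.mul_div_cancel_left _ (Nat.pow_pos (by omega))]

open scoped Classical in
/-- Support subtype conditions for a rank-1 Lee-equidistant code over `ℤ/p^sℤ`,
`p` odd, `s > 1`, generated by `g ∈ ⟨p^{i-1}⟩ \ ⟨p^i⟩` with constant weight `w`:
`n_j = 0` for `j < i-1`, `4w = (p+1)p^{s-1}n_{i-1}`, and
`n_{i-1}(p-1) = p^{j-i+2}n_j` for `i ≤ j ≤ s-1`. -/
theorem rank_one_equidistant_subtype (p s n i : ℕ) (hp : p.Prime) (hodd : Odd p)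
    (hs : 1 < s) (hi1 : 1 ≤ i) (his : i ≤ s)
    (m : ℕ) (hm : m = p ^ s) [NeZero m]
    (g : Fin n → ZMod m)
    (hg1 : ∀ j, g j ∈ Ideal.span {(p : ZMod m) ^ (i - 1)})
    (hg2 : ¬ ∀ j, g j ∈ Ideal.span {(p : ZMod m) ^ i})
    (C : Submodule (ZMod m) (Fin n → ZMod m))
    (hC : C = Submodule.span (ZMod m) {g})
    (w : ℕ) (hw : w ≠ 0)
    (hequi : ∀ c ∈ C, c ≠ 0 → leeWV m n c = w)
    (hnd : ∀ j : Fin n, Submodule.map (LinearMap.proj j) C ≠ ⊥)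
    (nF : ℕ → ℕ)
    (hn : ∀ t, nF t = (Finset.univ.filter (fun j : Fin n =>
        Submodule.map (LinearMap.proj j) C
          = Submodule.span (ZMod m) {(p : ZMod m) ^ t})).card) :
    (∀ j, j + 1 < i → nF j = 0) ∧
    4 * w = (p + 1) * p ^ (s - 1) * nF (i - 1) ∧
    (∀ j, i ≤ j → j ≤ s - 1 → nF (i - 1) * (p - 1) = p ^ (j - i + 2) * nF j) := by
  subst hm
  subst hC
  have hp1 : 1 < p := hp.one_lt
  have hps0 : (p : ZMod (p^s))^s = 0 := by
    have : ((p^s : ℕ) : ZMod (p^s)) = 0 := ZMod.natCast_self _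
    push_cast at this
    exact this
  -- projections are spans of coordinates
  have hproj : ∀ j : Fin n, Submodule.map (LinearMap.proj j)
      (Submodule.span (ZMod (p^s)) {g}) = Submodule.span (ZMod (p^s)) {g j} := by
    intro j
    rw [Submodule.map_span, Set.image_singleton]
    rfl
  have hgne : ∀ j, g j ≠ 0 := by
    intro j h
    exact hnd j (by rw [hproj j, h, Submodule.span_singleton_eq_bot.mpr rfl])
  -- valuations and unit decomposition
  set T : Fin n → ℕ := fun j => padicValNat p (g j).val with hT
  have hUex : ∀ j, ∃ u : (ZMod (p^s))ˣ, g j = (p:ZMod (p^s))^(T j) * u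
      ∧ T j < s ∧ p^(T j) ∣ (g j).val ∧ ¬ p^(T j + 1) ∣ (g j).val :=
    fun j => decomp_unit p s hp (g j) (hgne j)
  choose U hU1 hU2 hU3 hU4 using hUex
  have hTlow : ∀ j, i - 1 ≤ T j := by
    intro j
    by_contra hc
    push_neg at hc
    have h1 : p^(i-1) ∣ (g j).val :=
      (mem_span_pow_iff p s (i-1) (by omega) (g j)).mp (hg1 j)
    exact hU4 j (dvd_trans (pow_dvd_pow p (by omega)) h1)
  obtain ⟨j0, hj0⟩ : ∃ j0, T j0 = i - 1 := by
    by_contra hc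
    push_neg at hc
    apply hg2
    intro j
    rw [mem_span_pow_iff p s i his (g j)]
    have := hTlow j
    have := hc j
    exact dvd_trans (pow_dvd_pow p (by omega)) (hU3 j)
  -- projection submodules as spans of powers of p
  have hspan_eq : ∀ j : Fin n, Submodule.map (LinearMap.proj j)
      (Submodule.span (ZMod (p^s)) {g})
      = Ideal.span {(p:ZMod (p^s))^(T j)} := by
    intro j
    rw [hproj j]
    have : ({g j} : Set (ZMod (p^s))) = {(p:ZMod (p^s))^(T j) * (U j : ZMod (p^s))} := by
      rw [hU1 j]
    rw [this]
    exact Ideal.span_singleton_mul_right_unit (U j).isUnit _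
  have hfilter : ∀ t, t < s → nF t = (Finset.univ.filter (fun j : Fin n => T j = t)).card := by
    intro t ht
    rw [hn t]
    congr 1
    apply Finset.filter_congr
    intro j _
    rw [hspan_eq j]
    constructor
    · intro h
      exact span_pow_inj p s (T j) t hp1 (hU2 j) ht h
    · rintro rfl
      rfl
  -- claim 1
  have claim1 : ∀ j, j + 1 < i → nF j = 0 := by
    intro t ht
    rw [hfilter t (by omega), Finset.card_eq_zero, Finset.filter_eq_empty_iff]
    intro j _
    have := hTlow j
    omega
  -- the coordinate formula
  have hcoord : ∀ (k : ℕ) (a : ZMod (p^s)) (j : Fin n),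
      (a • ((p:ZMod (p^s))^k • g)) j
        = a * ((p:ZMod (p^s))^(min (T j + k) s) * (U j : ZMod (p^s))) := by
    intro k a j
    have h0 : (a • ((p:ZMod (p^s))^k • g)) j = a * ((p:ZMod (p^s))^k * g j) := by
      simp [Pi.smul_apply, smul_eq_mul]
    rw [h0, hU1 j]
    rcases le_or_gt (T j + k) s with hle | hlt
    · rw [min_eq_left hle]
      rw [pow_add]
      ring
    · rw [min_eq_right (by omega : s ≤ T j + k)]
      have h1 : (p:ZMod (p^s))^k * (p:ZMod (p^s))^(T j) = 0 := by
        rw [← pow_add]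
        have e : k + T j = s + (k + T j - s) := by omega
        rw [e, pow_add, hps0, zero_mul]
      have h3 : (p:ZMod (p^s))^k * ((p:ZMod (p^s))^(T j) * (U j : ZMod (p^s))) = 0 := by
        rw [← mul_assoc, h1, zero_mul]
      rw [hps0, zero_mul, mul_zero, h3, mul_zero]
  -- per-coordinate weighted sum
  have coordSum : ∀ k : ℕ,
      4 * ∑ a : ZMod (p^s), leeWV (p^s) n (a • ((p:ZMod (p^s))^k • g))
        = ∑ j : Fin n, (p^(2*s) - p^(2 * min (T j + k) s)) := by
    intro k
    have e1 : ∀ a : ZMod (p^s), leeWV (p^s) n (a • ((p:ZMod (p^s))^k • g))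
        = ∑ j : Fin n, leeW (p^s)
            (a * ((p:ZMod (p^s))^(min (T j + k) s) * (U j : ZMod (p^s)))) := by
      intro a
      unfold leeWV
      exact Finset.sum_congr rfl (fun j _ => by rw [hcoord k a j])
    rw [Finset.sum_congr rfl (fun a _ => e1 a), Finset.sum_comm, Finset.mul_sum]
    exact Finset.sum_congr rfl
      (fun j _ => sum_lee_unit p s _ hp1 hodd (min_le_right _ _) (U j))
  -- zero fibre count
  have zcount : ∀ k : ℕ,
      (Finset.univ.filter (fun a : ZMod (p^s) => a • ((p:ZMod (p^s))^k • g) = 0)).card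
        = p^(min (i-1+k) s) := by
    intro k
    have hiff : ∀ a : ZMod (p^s),
        (a • ((p:ZMod (p^s))^k • g) = 0) ↔ p^(s - min (i-1+k) s) ∣ a.val := by
      intro a
      rw [funext_iff]
      have hj : ∀ j : Fin n, (a • ((p:ZMod (p^s))^k • g)) j = 0
          ↔ p^(s - min (T j + k) s) ∣ a.val := by
        intro j
        rw [hcoord k a j]
        have e : a * ((p:ZMod (p^s))^(min (T j + k) s) * (U j : ZMod (p^s)))
            = (U j : ZMod (p^s)) * (a * (p:ZMod (p^s))^(min (T j + k) s)) := by ring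
        rw [e, Units.mul_right_eq_zero,
          mul_pow_eq_zero_iff p s _ hp1 (min_le_right _ _)]
      constructor
      · intro h
        have h0 := (hj j0).mp (by rw [h j0]; simp)
        rw [hj0] at h0
        exact h0
      · intro h j
        simp only [Pi.zero_apply]
        rw [hj j]
        refine dvd_trans (pow_dvd_pow p ?_) h
        have := hTlow j
        omega
    rw [Finset.filter_congr (fun a _ => hiff a), card_val_dvd p s _ hp1 (by omega)]
    congr 1
    omega
  -- total weight count
  have wsum : ∀ k : ℕ,
      ∑ a : ZMod (p^s), leeWV (p^s) n (a • ((p:ZMod (p^s))^k • g))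
        = (p^s - p^(min (i-1+k) s)) * w := by
    intro k
    have hsplit := Finset.sum_filter_add_sum_filter_not Finset.univ
      (fun a : ZMod (p^s) => a • ((p:ZMod (p^s))^k • g) = 0)
      (fun a => leeWV (p^s) n (a • ((p:ZMod (p^s))^k • g)))
    have hzero : ∑ a ∈ Finset.univ.filter
        (fun a : ZMod (p^s) => a • ((p:ZMod (p^s))^k • g) = 0),
        leeWV (p^s) n (a • ((p:ZMod (p^s))^k • g)) = 0 := by
      apply Finset.sum_eq_zero
      intro a ha
      rw [Finset.mem_filter] at ha
      rw [ha.2]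
      simp [leeWV, leeW]
    have hnz : ∑ a ∈ Finset.univ.filter
        (fun a : ZMod (p^s) => ¬ a • ((p:ZMod (p^s))^k • g) = 0),
        leeWV (p^s) n (a • ((p:ZMod (p^s))^k • g))
        = (Finset.univ.filter
            (fun a : ZMod (p^s) => ¬ a • ((p:ZMod (p^s))^k • g) = 0)).card * w := by
      rw [Finset.sum_congr rfl (fun a ha => ?_), Finset.sum_const, smul_eq_mul]
      rw [Finset.mem_filter] at ha
      refine hequi _ ?_ ha.2
      exact Submodule.smul_mem _ _ (Submodule.smul_mem _ _
        (Submodule.mem_span_singleton_self g))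
    have hcards := Finset.card_filter_add_card_filter_not
      (s := (Finset.univ : Finset (ZMod (p^s))))
      (fun a : ZMod (p^s) => a • ((p:ZMod (p^s))^k • g) = 0)
    rw [Finset.card_univ, ZMod.card] at hcards
    rw [zcount k] at hcards
    have hple : p^(min (i-1+k) s) ≤ p^s := Nat.pow_le_pow_right (by omega) (by omega)
    rw [← hsplit, hzero, hnz]
    have : (Finset.univ.filter
        (fun a : ZMod (p^s) => ¬ a • ((p:ZMod (p^s))^k • g) = 0)).card
        = p^s - p^(min (i-1+k) s) := by omega
    rw [this]
    omega
  -- the master identity over ℤ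
  have GZ : ∀ k : ℕ, ((p:ℤ)^s - (p:ℤ)^(min (i-1+k) s)) * w * 4
      = ∑ j : Fin n, ((p:ℤ)^(2*s) - (p:ℤ)^(2 * min (T j + k) s)) := by
    intro k
    have GN : (p^s - p^(min (i-1+k) s)) * w * 4
        = ∑ j : Fin n, (p^(2*s) - p^(2 * min (T j + k) s)) := by
      calc (p^s - p^(min (i-1+k) s)) * w * 4
          = 4 * ((p^s - p^(min (i-1+k) s)) * w) := by ring
        _ = 4 * ∑ a : ZMod (p^s), leeWV (p^s) n (a • ((p:ZMod (p^s))^k • g)) := by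
            rw [wsum k]
        _ = _ := coordSum k
    have hcast := congrArg (Nat.cast : ℕ → ℤ) GN
    have hple : p^(min (i-1+k) s) ≤ p^s := Nat.pow_le_pow_right (by omega) (by omega)
    rw [Nat.cast_mul, Nat.cast_mul, Nat.cast_sub hple, Nat.cast_sum] at hcast
    push_cast at hcast
    rw [hcast]
    refine Finset.sum_congr rfl (fun j _ => ?_)
    rw [Nat.cast_sub (Nat.pow_le_pow_right (by omega) (by omega))]
    push_cast
    ring
  -- partial sums of p^(2 T j)
  set QZ : ℕ → ℤ := fun r =>
    ∑ j ∈ Finset.univ.filter (fun j : Fin n => T j ≤ r), (p:ℤ)^(2 * T j) with hQZ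
  have HZ : ∀ k r : ℕ, k + r = s - 1 → i - 1 ≤ r →
      4 * (p:ℤ)^(i-1+k) * w = ((p:ℤ)+1) * (p:ℤ)^(2*k) * QZ r := by
    intro k r hkr hir
    have h1 := GZ k
    have h2 := GZ (k+1)
    have m1 : min (i-1+k) s = i-1+k := by omega
    have m2 : min (i-1+(k+1)) s = (i-1+k)+1 := by omega
    rw [m1] at h1
    rw [m2] at h2
    have hdiff : ((p:ℤ)^((i-1+k)+1) - (p:ℤ)^(i-1+k)) * w * 4
        = ∑ j : Fin n, ((p:ℤ)^(2 * min (T j + (k+1)) s) - (p:ℤ)^(2 * min (T j + k) s)) := by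
      calc ((p:ℤ)^((i-1+k)+1) - (p:ℤ)^(i-1+k)) * w * 4
          = ((p:ℤ)^s - (p:ℤ)^(i-1+k)) * w * 4 - ((p:ℤ)^s - (p:ℤ)^((i-1+k)+1)) * w * 4 := by
            ring
        _ = (∑ j : Fin n, ((p:ℤ)^(2*s) - (p:ℤ)^(2 * min (T j + k) s)))
            - ∑ j : Fin n, ((p:ℤ)^(2*s) - (p:ℤ)^(2 * min (T j + (k+1)) s)) := by
            rw [h1, h2]
        _ = _ := by
            rw [← Finset.sum_sub_distrib]
            exact Finset.sum_congr rfl (fun j _ => by ring)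
    have hterm : ∀ j : Fin n,
        (p:ℤ)^(2 * min (T j + (k+1)) s) - (p:ℤ)^(2 * min (T j + k) s)
          = ((p:ℤ)^2 - 1) * (p:ℤ)^(2*k) * (if T j ≤ r then (p:ℤ)^(2*T j) else 0) := by
      intro j
      by_cases hc : T j ≤ r
      · have e1 : 2 * min (T j + k) s = 2*(T j) + 2*k := by omega
        have e2 : 2 * min (T j + (k+1)) s = 2*(T j) + 2*k + 2 := by omega
        rw [e1, e2, if_pos hc]
        ring
      · have hTj := hU2 j
        have e1 : 2 * min (T j + k) s = 2*s := by omega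
        have e2 : 2 * min (T j + (k+1)) s = 2*s := by omega
        rw [e1, e2, if_neg hc]
        ring
    rw [Finset.sum_congr rfl (fun j _ => hterm j), ← Finset.mul_sum,
      ← Finset.sum_filter] at hdiff
    have hcancel : ((p:ℤ)-1) * (4 * (p:ℤ)^(i-1+k) * w)
        = ((p:ℤ)-1) * (((p:ℤ)+1) * (p:ℤ)^(2*k) * QZ r) := by
      rw [hQZ]
      linear_combination hdiff
    refine mul_left_cancel₀ ?_ hcancel
    have : (2:ℤ) ≤ (p:ℤ) := by exact_mod_cast (by omega : 2 ≤ p)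
    omega
  -- recursion for QZ
  have Qrec : ∀ r : ℕ, i ≤ r → r ≤ s - 1 → QZ r = p * QZ (r-1) := by
    intro r hir hrs
    have h1 := HZ (s-1-r) r (by omega) (by omega)
    have h2 := HZ (s-r) (r-1) (by omega) (by omega)
    have e1 : i-1+(s-r) = (i-1+(s-1-r)) + 1 := by omega
    have e2 : 2*(s-r) = 2*(s-1-r) + 2 := by omega
    rw [e1, e2] at h2
    have hc : ((p:ℤ)+1) * (p:ℤ)^(2*(s-1-r)+1) ≠ 0 := by
      have h3 : (0:ℤ) < (p:ℤ) := by exact_mod_cast (by omega : 0 < p)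
      positivity
    refine mul_left_cancel₀ hc ?_
    linear_combination h2 - (p:ℤ) * h1
  have Qbase : QZ (i-1) = (nF (i-1) : ℤ) * (p:ℤ)^(2*(i-1)) := by
    show (∑ j ∈ Finset.univ.filter (fun j : Fin n => T j ≤ i-1), (p:ℤ)^(2 * T j))
      = (nF (i-1) : ℤ) * (p:ℤ)^(2*(i-1))
    have hfeq : Finset.univ.filter (fun j : Fin n => T j ≤ i-1)
        = Finset.univ.filter (fun j : Fin n => T j = i-1) := by
      apply Finset.filter_congr
      intro j _
      have := hTlow j
      omega
    rw [hfeq]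
    rw [Finset.sum_congr rfl (fun j hj => ?_), Finset.sum_const, nsmul_eq_mul,
      hfilter (i-1) (by omega)]
    rw [Finset.mem_filter] at hj
    rw [hj.2]
  have Qpow : ∀ d : ℕ, i-1+d ≤ s-1 → QZ (i-1+d) = (p:ℤ)^d * QZ (i-1) := by
    intro d
    induction d with
    | zero => simp
    | succ d ih =>
      intro hd
      have hrec := Qrec (i-1+(d+1)) (by omega) (by omega)
      have e : i-1+(d+1)-1 = i-1+d := by omega
      rw [e] at hrec
      rw [hrec, ih (by omega)]
      ring
  -- claim 2
  have claim2 : 4 * w = (p + 1) * p ^ (s - 1) * nF (i - 1) := by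
    have h1 := HZ (s-i) (i-1) (by omega) (le_refl _)
    have e1 : i-1+(s-i) = s-1 := by omega
    rw [e1, Qbase] at h1
    have e2 : (p:ℤ)^(2*(s-i)) * (p:ℤ)^(2*(i-1)) = (p:ℤ)^(s-1) * (p:ℤ)^(s-1) := by
      rw [← pow_add, ← pow_add]
      congr 1
      omega
    have key : (p:ℤ)^(s-1) * ((4:ℤ) * w)
        = (p:ℤ)^(s-1) * (((p:ℤ)+1) * (p:ℤ)^(s-1) * (nF (i-1) : ℤ)) := by
      linear_combination h1 + ((p:ℤ)+1) * (nF (i-1) : ℤ) * e2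
    have hpne : (p:ℤ)^(s-1) ≠ 0 := by
      have h3 : (0:ℤ) < (p:ℤ) := by exact_mod_cast (by omega : 0 < p)
      positivity
    have := mul_left_cancel₀ hpne key
    exact_mod_cast this
  -- claim 3
  have claim3 : ∀ j, i ≤ j → j ≤ s - 1 → nF (i - 1) * (p - 1) = p ^ (j - i + 2) * nF j := by
    intro r hir hrs
    -- split the filtered sum
    have hsplitQ : QZ r = QZ (r-1) + (nF r : ℤ) * (p:ℤ)^(2*r) := by
      have hun : Finset.univ.filter (fun j : Fin n => T j ≤ r)
          = Finset.univ.filter (fun j : Fin n => T j ≤ r-1)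
            ∪ Finset.univ.filter (fun j : Fin n => T j = r) := by
        ext j
        simp only [Finset.mem_filter, Finset.mem_union, Finset.mem_univ, true_and]
        omega
      have hdisj : Disjoint (Finset.univ.filter (fun j : Fin n => T j ≤ r-1))
          (Finset.univ.filter (fun j : Fin n => T j = r)) := by
        rw [Finset.disjoint_left]
        intro j hj1 hj2
        rw [Finset.mem_filter] at hj1 hj2
        omega
      have hlast : ∑ j ∈ Finset.univ.filter (fun j : Fin n => T j = r), (p:ℤ)^(2 * T j)
          = (nF r : ℤ) * (p:ℤ)^(2*r) := by
        rw [Finset.sum_congr rfl (fun j hj => ?_), Finset.sum_const, nsmul_eq_mul,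
          hfilter r (by omega)]
        rw [Finset.mem_filter] at hj
        rw [hj.2]
      show (∑ j ∈ Finset.univ.filter (fun j : Fin n => T j ≤ r), (p:ℤ)^(2 * T j))
        = QZ (r-1) + (nF r : ℤ) * (p:ℤ)^(2*r)
      rw [hun, Finset.sum_union hdisj, hlast]
    have hq1 : QZ r = (p:ℤ)^(r-i+1) * QZ (i-1) := by
      have := Qpow (r-i+1) (by omega)
      have e : i-1+(r-i+1) = r := by omega
      rw [e] at this
      exact this
    have hq2 : QZ (r-1) = (p:ℤ)^(r-i) * QZ (i-1) := by
      have := Qpow (r-i) (by omega)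
      have e : i-1+(r-i) = r-1 := by omega
      rw [e] at this
      exact this
    have hrel : (nF r : ℤ) * (p:ℤ)^(2*r)
        = ((p:ℤ)-1) * (p:ℤ)^(r-i) * ((nF (i-1) : ℤ) * (p:ℤ)^(2*(i-1))) := by
      have h0 : (p:ℤ)^(r-i+1) = (p:ℤ)^(r-i) * p := pow_succ _ _
      rw [hq1, hq2, Qbase, h0] at hsplitQ
      linear_combination -hsplitQ
    have eA : (p:ℤ)^(2*r) = (p:ℤ)^(r+i-2) * (p:ℤ)^(r-i+2) := by
      rw [← pow_add]
      congr 1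
      omega
    have eC : (p:ℤ)^(r-i) * (p:ℤ)^(2*(i-1)) = (p:ℤ)^(r+i-2) := by
      rw [← pow_add]
      congr 1
      omega
    rw [eA] at hrel
    have key : (p:ℤ)^(r+i-2) * ((nF (i-1) : ℤ) * ((p:ℤ)-1))
        = (p:ℤ)^(r+i-2) * ((p:ℤ)^(r-i+2) * (nF r : ℤ)) := by
      linear_combination (-1 : ℤ) * hrel - ((p:ℤ)-1) * (nF (i-1) : ℤ) * eC
    have hpne : (p:ℤ)^(r+i-2) ≠ 0 := by
      have h3 : (0:ℤ) < (p:ℤ) := by exact_mod_cast (by omega : 0 < p)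
      positivity
    have hz := mul_left_cancel₀ hpne key
    have : ((nF (i-1) * (p - 1) : ℕ) : ℤ) = ((p ^ (r-i+2) * nF r : ℕ) : ℤ) := by
      push_cast [Nat.cast_sub (by omega : 1 ≤ p)]
      exact_mod_cast hz
    exact_mod_cast this
  exact ⟨claim1, claim2, claim3⟩
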